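/- Let Q : ℝ² → ℝ be a convex function and Ξ = conv{ξ¹, ξ², ξ³} a 2-simplex in ℝ² with μ ∈ Ξ written uniquely as μ = p₁ξ¹ + p₂ξ² + p₃ξ³ with pₖ ≥ 0 summing to 1. Then for every probability measure ℙ on Ξ with barycenter μ (i.e., ∫ ξ dℙ = μ), we have ∫ Q(ξ) dℙ ≤ p₁Q(ξ¹) + p₂Q(ξ²) + p₃Q(ξ³). -/

import Mathlib

open MeasureTheory

lemma aux_integrable {E : Type*} [NormedAddCommGroup E] {f : ℝ × ℝ → E}
    (hf : Continuous f) {K : Set (ℝ × ℝ)} (hK : IsCompact K)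
    (ℙ : Measure (ℝ × ℝ)) [IsProbabilityMeasure ℙ] (hae : ∀ᵐ x ∂ℙ, x ∈ K) :
    Integrable f ℙ := by
  obtain ⟨C, hC⟩ := hK.exists_bound_of_continuousOn hf.continuousOn
  exact (integrable_const C).mono' hf.aestronglyMeasurable
    (hae.mono fun x hx => hC x hx)

/-- Any probability measure supported on a 2-simplex with barycenter μ has
expectation of a convex function at most the barycentric combination of vertex values. -/
theorem stmt_1 (Q : ℝ × ℝ → ℝ) (hQ : ConvexOn ℝ Set.univ Q)
    (ξ : Fin 3 → ℝ × ℝ) (hξ : AffineIndependent ℝ ξ)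
    (p : Fin 3 → ℝ) (hp0 : ∀ k, 0 ≤ p k) (hp1 : ∑ k, p k = 1)
    (μ : ℝ × ℝ) (hμ : ∑ k, p k • ξ k = μ)
    (ℙ : Measure (ℝ × ℝ)) [IsProbabilityMeasure ℙ]
    (hsupp : ℙ (convexHull ℝ (Set.range ξ)) = 1)
    (hmean : (∫ x, x ∂ℙ) = μ) :
    (∫ x, Q x ∂ℙ) ≤ ∑ k, p k * Q (ξ k) := by
  -- ξ is an affine basis of ℝ²
  have hspan : affineSpan ℝ (Set.range ξ) = ⊤ := by
    rw [hξ.affineSpan_eq_top_iff_card_eq_finrank_add_one]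
    simp [Module.finrank_prod]
  let b : AffineBasis (Fin 3) ℝ (ℝ × ℝ) := ⟨ξ, hξ, hspan⟩
  have hbk : ∀ k, b k = ξ k := fun k => rfl
  have hrange : Set.range ⇑b = Set.range ξ := rfl
  -- barycentric coordinates of μ are p
  have hcoordμ : ∀ k, b.coord k μ = p k := by
    intro k
    have hμ' : μ = Finset.univ.affineCombination ℝ ξ p := by
      rw [Finset.univ.affineCombination_eq_linear_combination ξ p hp1, hμ]
    rw [hμ']
    exact b.coord_apply_combination_of_mem (Finset.mem_univ k) hp1
  -- Q is continuous
  have hQcont : Continuous Q := continuousOn_univ.mp (hQ.continuousOn isOpen_univ)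
  -- the simplex is compact
  set K := convexHull ℝ (Set.range ξ) with hK
  have hKcomp : IsCompact K := (Set.finite_range ξ).isCompact_convexHull ℝ
  have hae : ∀ᵐ x ∂ℙ, x ∈ K := by
    rw [Filter.eventually_iff, mem_ae_iff]
    rwa [← prob_compl_eq_zero_iff hKcomp.isClosed.measurableSet] at hsupp
  -- integrability
  have hQint : Integrable Q ℙ := aux_integrable hQcont hKcomp ℙ hae
  have hidint : Integrable (fun x : ℝ × ℝ => x) ℙ :=
    aux_integrable continuous_id hKcomp ℙ hae
  have hcint : ∀ k, Integrable (fun x => b.coord k x) ℙ := fun k =>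
    aux_integrable (b.coord k).continuous_of_finiteDimensional hKcomp ℙ hae
  -- expected barycentric coordinates
  have hEcoord : ∀ k, (∫ x, b.coord k x ∂ℙ) = p k := by
    intro k
    set L := LinearMap.toContinuousLinearMap (b.coord k).linear with hL
    have hdec : ∀ x, b.coord k x = L x + b.coord k 0 := by
      intro x
      have := (b.coord k).decomp
      rw [hL]
      simp only [LinearMap.coe_toContinuousLinearMap']
      conv_lhs => rw [this]
      rfl
    calc (∫ x, b.coord k x ∂ℙ) = ∫ x, (L x + b.coord k 0) ∂ℙ :=
        integral_congr_ae (Filter.Eventually.of_forall hdec)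
      _ = (∫ x, L x ∂ℙ) + b.coord k 0 := by
          rw [integral_add (L.integrable_comp hidint) (integrable_const _),
            integral_const, probReal_univ, one_smul]
      _ = L (∫ x, x ∂ℙ) + b.coord k 0 := by rw [L.integral_comp_comm hidint]
      _ = b.coord k μ := by rw [hmean, ← hdec]
      _ = p k := hcoordμ k
  -- pointwise Jensen on the simplex
  have hptwise : ∀ᵐ x ∂ℙ, Q x ≤ ∑ k, b.coord k x * Q (ξ k) := by
    filter_upwards [hae] with x hx
    have hnn : ∀ k, 0 ≤ b.coord k x := by
      have := b.convexHull_eq_nonneg_coord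
      rw [hrange] at this
      rw [hK, this] at hx
      exact hx
    have hJ := hQ.map_sum_le (t := Finset.univ) (fun i _ => hnn i)
      (b.sum_coord_apply_eq_one x) (fun i _ => Set.mem_univ (ξ i))
    rwa [show ∑ i, b.coord i x • ξ i = x from b.linear_combination_coord_eq_self x] at hJ
  -- conclude
  have hRHSint : Integrable (fun x => ∑ k, b.coord k x * Q (ξ k)) ℙ :=
    integrable_finset_sum _ fun k _ => (hcint k).mul_const _
  calc (∫ x, Q x ∂ℙ) ≤ ∫ x, ∑ k, b.coord k x * Q (ξ k) ∂ℙ :=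
        integral_mono_ae hQint hRHSint hptwise
    _ = ∑ k, (∫ x, b.coord k x ∂ℙ) * Q (ξ k) := by
        rw [integral_finset_sum _ fun k _ => (hcint k).mul_const _]
        simp_rw [integral_mul_const]
    _ = ∑ k, p k * Q (ξ k) := by simp_rw [hEcoord]
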